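/- Let $a_1,\dots,a_m$ and $p_1,\dots,p_m$ be nonnegative real numbers with $p_1>0$, and let $p>1$. Then $\sum_{n=1}^m \left(\frac{\sum_{i=1}^n a_i p_i}{\sum_{i=1}^n p_i}\right)^p p_n \le \left(\frac{p}{p-1}\right)^p \sum_{n=1}^m a_n^p p_n$. -/

import Mathlib

open Finset

private lemma tele_sum (m : ℕ) (f : ℕ → ℝ) :
    ∑ n ∈ Finset.Icc 1 m, (f (n - 1) - f n) = f 0 - f m := by
  induction m with
  | zero => simp
  | succ k ih =>
    rw [Finset.sum_Icc_succ_top (Nat.le_add_left 1 k), ih]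
    simp

private lemma sum_Icc_split (f : ℕ → ℝ) (n : ℕ) (hn : 1 ≤ n) :
    ∑ i ∈ Finset.Icc 1 n, f i = (∑ i ∈ Finset.Icc 1 (n - 1), f i) + f n := by
  obtain ⟨k, rfl⟩ := Nat.exists_eq_add_of_le hn
  rw [show 1 + k = k + 1 by ring, Nat.add_sub_cancel,
    Finset.sum_Icc_succ_top (Nat.le_add_left 1 k)]

/-- Finite weighted discrete Hardy inequality (Broadbent-style). -/
theorem finite_weighted_hardy (m : ℕ) (p : ℝ) (hp : 1 < p) (a w : ℕ → ℝ)
    (ha : ∀ i, 0 ≤ a i) (hw : ∀ i, 0 ≤ w i) (hw1 : 0 < w 1) :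
    ∑ n ∈ Finset.Icc 1 m,
        ((∑ i ∈ Finset.Icc 1 n, a i * w i) / (∑ i ∈ Finset.Icc 1 n, w i)) ^ p * w n
      ≤ (p / (p - 1)) ^ p * ∑ n ∈ Finset.Icc 1 m, a n ^ p * w n := by
  have hp0 : 0 < p := lt_trans one_pos hp
  have hp1 : 0 < p - 1 := by linarith
  set q : ℝ := p / (p - 1) with hq
  have hpq : p.HolderConjugate q := Real.HolderConjugate.conjExponent hp
  have hq1 : 1 < q := hpq.symm.lt
  have hq0 : 0 < q := lt_trans one_pos hq1
  have hpq1 : (p - 1) * q = p := hpq.sub_one_mul_conj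
  set W : ℕ → ℝ := fun n => ∑ i ∈ Finset.Icc 1 n, w i with hW
  set T : ℕ → ℝ := fun n => ∑ i ∈ Finset.Icc 1 n, a i * w i with hT
  set A : ℕ → ℝ := fun n => T n / W n with hA
  have hWpos : ∀ n, 1 ≤ n → 0 < W n := by
    intro n hn
    have h1 : w 1 ≤ W n := by
      apply Finset.single_le_sum (fun i _ => hw i)
      simp [Finset.mem_Icc, hn]
    linarith
  have hWnn : ∀ n, 0 ≤ W n := fun n => Finset.sum_nonneg fun i _ => hw i
  have hTnn : ∀ n, 0 ≤ T n := fun n =>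
    Finset.sum_nonneg fun i _ => mul_nonneg (ha i) (hw i)
  have hAnn : ∀ n, 0 ≤ A n := fun n => div_nonneg (hTnn n) (hWnn n)
  have hWA : ∀ n, W n * A n = T n := by
    intro n
    rcases Nat.eq_zero_or_pos n with h | h
    · subst h; simp [hA, hT, hW]
    · exact mul_div_cancel₀ _ (hWpos n h).ne'
  -- per-term key inequality
  have key : ∀ n ∈ Finset.Icc 1 m,
      A n ^ p * w n - q * (a n * w n * A n ^ (p - 1))
        ≤ (W (n - 1) * A (n - 1) ^ p - W n * A n ^ p) / (p - 1) := by
    intro n hn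
    rw [Finset.mem_Icc] at hn
    obtain ⟨hn1, _⟩ := hn
    set B := A (n - 1) with hB
    set C := A n with hC
    set u := W (n - 1) with hu
    set v := W n with hv
    set X := C ^ p with hX
    set Y := B ^ p with hY
    set Z := C ^ (p - 1) with hZ
    have hBnn : 0 ≤ B := hAnn _
    have hCnn : 0 ≤ C := hAnn _
    have hunn : 0 ≤ u := hWnn _
    have hXnn : 0 ≤ X := Real.rpow_nonneg hCnn _
    have hvu : v = u + w n := sum_Icc_split w n hn1
    have haw : a n * w n = v * C - u * B := by
      have h1 : T n = T (n - 1) + a n * w n := sum_Icc_split (fun i => a i * w i) n hn1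
      have h2 := hWA n
      have h3 := hWA (n - 1)
      rw [← hB] at h3; rw [← hC] at h2
      rw [← hu] at h3; rw [← hv] at h2
      linarith
    have hCZ : C * Z = X := by
      rw [hZ, hX, show p = (p - 1) + 1 by ring,
        Real.rpow_add' hCnn (by norm_num; linarith), Real.rpow_one]
      ring
    have hyoung : B * Z ≤ Y / p + X / q := by
      have h := Real.young_inequality_of_nonneg hBnn (Real.rpow_nonneg hCnn (p - 1)) hpq
      rwa [← Real.rpow_mul hCnn, hpq1, ← hY, ← hZ, ← hX] at h
    have hyoung' : p * (B * Z) ≤ Y + (p - 1) * X := by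
      have h := mul_le_mul_of_nonneg_left hyoung (le_of_lt hp0)
      have h2 : p * (Y / p + X / q) = Y + (p - 1) * X := by
        rw [hq]; field_simp
      linarith [h.trans_eq h2]
    have key2 : X * w n * (p - 1) - p * ((v * C - u * B) * Z) ≤ u * Y - v * X := by
      have hint1 := mul_le_mul_of_nonneg_left hyoung' hunn
      have hint2 : p * (v * (C * Z)) = p * (v * X) := by rw [hCZ]
      have hint3 : (p - 1) * X * v = (p - 1) * X * u + (p - 1) * X * w n := by
        rw [hvu]; ring
      nlinarith [hint1, hint2, hint3]
    rw [haw, le_div_iff₀ hp1]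
    have expand : (X * w n - q * ((v * C - u * B) * Z)) * (p - 1)
        = X * w n * (p - 1) - (p - 1) * q * ((v * C - u * B) * Z) := by ring
    rw [expand, hpq1]
    exact key2
  -- summed version
  set L : ℝ := ∑ n ∈ Finset.Icc 1 m, A n ^ p * w n with hL
  set M : ℝ := ∑ n ∈ Finset.Icc 1 m, a n * w n * A n ^ (p - 1) with hM
  set R : ℝ := ∑ n ∈ Finset.Icc 1 m, a n ^ p * w n with hR
  have hLnn : 0 ≤ L :=
    Finset.sum_nonneg fun n _ => mul_nonneg (Real.rpow_nonneg (hAnn n) _) (hw n)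
  have hRnn : 0 ≤ R :=
    Finset.sum_nonneg fun n _ => mul_nonneg (Real.rpow_nonneg (ha n) _) (hw n)
  have h1 : L ≤ q * M := by
    have hsum : L - q * M
        ≤ ∑ n ∈ Finset.Icc 1 m,
            (W (n - 1) * A (n - 1) ^ p - W n * A n ^ p) / (p - 1) := by
      rw [hL, hM, Finset.mul_sum, ← Finset.sum_sub_distrib]
      exact Finset.sum_le_sum key
    rw [← Finset.sum_div, tele_sum m (fun n => W n * A n ^ p)] at hsum
    have h0 : W 0 * A 0 ^ p = 0 := by
      have : W 0 = 0 := by simp [hW]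
      rw [this, zero_mul]
    have hm : 0 ≤ W m * A m ^ p := mul_nonneg (hWnn m) (Real.rpow_nonneg (hAnn m) _)
    have : (W 0 * A 0 ^ p - W m * A m ^ p) / (p - 1) ≤ 0 := by
      apply div_nonpos_of_nonpos_of_nonneg _ (le_of_lt hp1)
      rw [h0]; linarith
    linarith
  have hinv : 1 / p + 1 / q = 1 := by
    rw [one_div, one_div]; exact hpq.inv_add_inv_eq_one
  -- Hölder
  have h2 : M ≤ R ^ (1 / p) * L ^ (1 / q) := by
    have hH := Real.inner_le_Lp_mul_Lq_of_nonneg (s := Finset.Icc 1 m)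
      (f := fun n => a n * w n ^ (1 / p)) (g := fun n => A n ^ (p - 1) * w n ^ (1 / q)) hpq
      (fun i _ => mul_nonneg (ha i) (Real.rpow_nonneg (hw i) _))
      (fun i _ => mul_nonneg (Real.rpow_nonneg (hAnn i) _) (Real.rpow_nonneg (hw i) _))
    have heqM : M = ∑ n ∈ Finset.Icc 1 m,
        (a n * w n ^ (1 / p)) * (A n ^ (p - 1) * w n ^ (1 / q)) := by
      apply Finset.sum_congr rfl
      intro n _
      have hwsplit : w n ^ (1 / p) * w n ^ (1 / q) = w n := by
        rw [← Real.rpow_add' (hw n) (by rw [hinv]; norm_num), hinv, Real.rpow_one]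
      calc a n * w n * A n ^ (p - 1)
          = a n * (w n ^ (1 / p) * w n ^ (1 / q)) * A n ^ (p - 1) := by rw [hwsplit]
        _ = (a n * w n ^ (1 / p)) * (A n ^ (p - 1) * w n ^ (1 / q)) := by ring
    have heqR : ∑ n ∈ Finset.Icc 1 m, (a n * w n ^ (1 / p)) ^ p = R := by
      apply Finset.sum_congr rfl
      intro n _
      rw [Real.mul_rpow (ha n) (Real.rpow_nonneg (hw n) _), ← Real.rpow_mul (hw n),
        one_div_mul_cancel hp0.ne', Real.rpow_one]
    have heqL : ∑ n ∈ Finset.Icc 1 m, (A n ^ (p - 1) * w n ^ (1 / q)) ^ q = L := by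
      apply Finset.sum_congr rfl
      intro n _
      rw [Real.mul_rpow (Real.rpow_nonneg (hAnn n) _) (Real.rpow_nonneg (hw n) _),
        ← Real.rpow_mul (hAnn n), hpq1, ← Real.rpow_mul (hw n),
        one_div_mul_cancel hq0.ne', Real.rpow_one]
    rw [heqM, ← heqR, ← heqL]
    exact hH
  -- combine
  rcases eq_or_lt_of_le hLnn with hL0 | hLpos
  · rw [← hL0]
    exact mul_nonneg (Real.rpow_nonneg hq0.le _) hRnn
  · have hLq : 0 < L ^ (1 / q) := Real.rpow_pos_of_pos hLpos _
    have h3 : L ≤ q * (R ^ (1 / p) * L ^ (1 / q)) :=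
      h1.trans (mul_le_mul_of_nonneg_left h2 hq0.le)
    have hLsplit : L = L ^ (1 / p) * L ^ (1 / q) := by
      rw [← Real.rpow_add hLpos, hinv, Real.rpow_one]
    have h5 : L ^ (1 / p) ≤ q * R ^ (1 / p) := by
      apply le_of_mul_le_mul_right _ hLq
      calc L ^ (1 / p) * L ^ (1 / q) = L := hLsplit.symm
        _ ≤ q * (R ^ (1 / p) * L ^ (1 / q)) := h3
        _ = q * R ^ (1 / p) * L ^ (1 / q) := by ring
    have h6 := Real.rpow_le_rpow (Real.rpow_nonneg hLnn _) h5 hp0.le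
    rw [← Real.rpow_mul hLnn, one_div_mul_cancel hp0.ne', Real.rpow_one,
      Real.mul_rpow hq0.le (Real.rpow_nonneg hRnn _), ← Real.rpow_mul hRnn,
      one_div_mul_cancel hp0.ne', Real.rpow_one] at h6
    exact h6
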